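/- Suppose Assumptions 1, 2, 3, and 4 hold and λ > λ̄. Let G > 1 be the unique solution of (G/m)·(1 − β(λΦ(G/m) + 1 − λ)) = βλ·∫_{G/m}^∞ z dΦ(z), with Φ(G/m) > 1 − 1/λ. Let (K_t, z̄_t)_{t≥0} follow the equilibrium dynamics with K_t > 0 and Φ(z̄_t) > 1 − 1/λ, and suppose K_t/G^t converges to a positive limit and z̄_t → G/m. Set P_t = P(K_t, z̄_t). Then ∑_{t=1}^∞ F_X(K_t,1)/P_t < ∞, land exhibits a bubble (P_t > V_t for all t), and the price-rent ratio P_t/F_X(K_t,1) diverges to ∞. (Land Bubble Characterization Theorem, part 2: unbalanced growth and a land price bubble above the leverage threshold.) -/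

import Mathlib

open Filter Topology MeasureTheory

/-- **Assumption 1.** `Φ` (the law `μ` of productivity) is an absolutely continuous
cdf on `[0,∞)` with `Φ(z) < 1` for all `z` and a finite mean. -/
structure Assumption1 (μ : Measure ℝ) : Prop where
  prob : IsProbabilityMeasure μ
  supp : μ (Set.Iio 0) = 0
  absCont : μ ≪ MeasureTheory.volume
  lt_one : ∀ z : ℝ, μ (Set.Iic z) < 1
  finite_mean : Integrable id μ

/-- The cdf `Φ` of the productivity distribution `μ`. -/
noncomputable def Phi (μ : Measure ℝ) (z : ℝ) : ℝ := (μ (Set.Iic z)).toReal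

/-- **Assumption 2.** `F` is homogeneous of degree one, concave, continuously
differentiable with positive marginal products `FK`, `FX`, and
`F(K,1)/K → m`, `F_K(K,1) → m` as `K → ∞` with `m > 0`. -/
structure Assumption2 (F FK FX : ℝ → ℝ → ℝ) (m : ℝ) : Prop where
  pos : ∀ K X : ℝ, 0 < K → 0 < X → 0 < F K X
  homog : ∀ c K X : ℝ, 0 < c → 0 < K → 0 < X → F (c * K) (c * X) = c * F K X
  concave : ConcaveOn ℝ (Set.Ioi 0 ×ˢ Set.Ioi 0) (fun p : ℝ × ℝ => F p.1 p.2)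
  hFK : ∀ K X : ℝ, 0 < K → 0 < X → HasDerivAt (fun k => F k X) (FK K X) K
  hFX : ∀ K X : ℝ, 0 < K → 0 < X → HasDerivAt (fun x => F K x) (FX K X) X
  FK_pos : ∀ K X : ℝ, 0 < K → 0 < X → 0 < FK K X
  FX_pos : ∀ K X : ℝ, 0 < K → 0 < X → 0 < FX K X
  FK_cont : ContinuousOn (fun p : ℝ × ℝ => FK p.1 p.2) (Set.Ioi 0 ×ˢ Set.Ioi 0)
  FX_cont : ContinuousOn (fun p : ℝ × ℝ => FX p.1 p.2) (Set.Ioi 0 ×ˢ Set.Ioi 0)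
  m_pos : 0 < m
  lim_avg : Filter.Tendsto (fun K => F K 1 / K) Filter.atTop (nhds m)
  lim_FK : Filter.Tendsto (fun K => FK K 1) Filter.atTop (nhds m)

/-- The leverage threshold `λ̄ = ((1−β)/β)·(∫ max{mz−1, 0} dΦ(z))⁻¹`. -/
noncomputable def lamBar (β m : ℝ) (μ : Measure ℝ) : ℝ :=
  ((1 - β) / β) * (∫ z, max (m * z - 1) 0 ∂μ)⁻¹

/-- Aggregate wealth `W(K, z̄)` as a function of capital and the investment threshold. -/
noncomputable def Wfun (μ : Measure ℝ) (β lam : ℝ) (F : ℝ → ℝ → ℝ) (K zb : ℝ) : ℝ :=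
  F K 1 / (1 - β * (lam * Phi μ zb + 1 - lam))

/-- Land price `P(K, z̄)` as a function of capital and the investment threshold. -/
noncomputable def Pfun (μ : Measure ℝ) (β lam : ℝ) (F : ℝ → ℝ → ℝ) (K zb : ℝ) : ℝ :=
  β * (lam * Phi μ zb + 1 - lam) * F K 1 / (1 - β * (lam * Phi μ zb + 1 - lam))

/- ### Auxiliary lemmas -/

private lemma summable_of_eventually_le_summable {u w : ℕ → ℝ}
    (hu : ∀ n, 0 ≤ u n) (hw : Summable w) (h : ∀ᶠ n in Filter.atTop, u n ≤ w n) :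
    Summable u := by
  obtain ⟨T, hT⟩ := Filter.eventually_atTop.1 h
  rw [← summable_nat_add_iff T]
  exact Summable.of_nonneg_of_le (fun n => hu _) (fun n => hT (n + T) (Nat.le_add_left T n))
    ((summable_nat_add_iff T).2 hw)

private lemma continuousAt_Phi (μ : Measure ℝ) (hprob : IsProbabilityMeasure μ) (x₀ : ℝ)
    (h0 : μ {x₀} = 0) : ContinuousAt (Phi μ) x₀ := by
  haveI := hprob
  have hmono : Monotone (Phi μ) := fun a b hab =>
    ENNReal.toReal_mono (measure_ne_top μ _) (measure_mono (Set.Iic_subset_Iic.2 hab))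
  rw [Metric.continuousAt_iff]
  intro ε hε
  set sfun : ℕ → Set ℝ := fun n => Set.Icc (x₀ - 1 / (n + 1)) (x₀ + 1 / (n + 1)) with hsfun
  have hanti : Antitone sfun := by
    intro n1 n2 hab
    have h12 : (1 : ℝ) / (n2 + 1) ≤ 1 / (n1 + 1) := by
      apply one_div_le_one_div_of_le (by positivity)
      have : (n1 : ℝ) ≤ n2 := by exact_mod_cast hab
      linarith
    apply Set.Icc_subset_Icc (by linarith) (by linarith)
  have hiInt : (⋂ n, sfun n) = {x₀} := by
    apply Set.eq_singleton_iff_unique_mem.2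
    constructor
    · refine Set.mem_iInter.2 fun n => ⟨by simp; positivity, by simp; positivity⟩
    · intro x hx
      by_contra hne
      have hd : 0 < |x - x₀| := abs_pos.2 (sub_ne_zero.2 hne)
      obtain ⟨n, hn⟩ := exists_nat_one_div_lt hd
      have hxn := Set.mem_iInter.1 hx n
      simp only [hsfun, Set.mem_Icc] at hxn
      have habs : |x - x₀| ≤ 1 / (n + 1) := abs_le.2 ⟨by linarith [hxn.1], by linarith [hxn.2]⟩
      linarith
  have hlim : Tendsto (fun n => (μ (sfun n)).toReal) atTop (𝓝 0) := by
    have h1 : Tendsto (μ ∘ sfun) atTop (𝓝 (μ (⋂ n, sfun n))) :=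
      tendsto_measure_iInter_atTop (fun n => measurableSet_Icc.nullMeasurableSet) hanti
        ⟨0, measure_ne_top μ _⟩
    rw [hiInt, h0] at h1
    have h2 := (ENNReal.tendsto_toReal (by simp)).comp h1
    exact h2
  obtain ⟨n, hn⟩ := (hlim.eventually (gt_mem_nhds hε)).exists
  refine ⟨1 / (n + 1), by positivity, ?_⟩
  intro x hx
  rw [Real.dist_eq] at hx ⊢
  have hx1 : x - x₀ < 1 / (n + 1) := (abs_lt.1 hx).2
  have hx2 : -(1 / (n + 1)) < x - x₀ := (abs_lt.1 hx).1
  have hb : Phi μ (x₀ + 1 / (n + 1)) - Phi μ (x₀ - 1 / (n + 1)) ≤ (μ (sfun n)).toReal := by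
    have hsub : Set.Iic (x₀ + 1 / (n + 1)) ⊆ sfun n ∪ Set.Iic (x₀ - 1 / (n + 1)) := by
      intro y hy
      rcases le_or_gt y (x₀ - 1 / (n + 1)) with h | h
      · exact Or.inr h
      · exact Or.inl ⟨h.le, hy⟩
    have hmeas : μ (Set.Iic (x₀ + 1 / (n + 1))) ≤ μ (sfun n) + μ (Set.Iic (x₀ - 1 / (n + 1))) :=
      le_trans (measure_mono hsub) (measure_union_le _ _)
    have h3 := ENNReal.toReal_mono (by finiteness) hmeas
    rw [ENNReal.toReal_add (measure_ne_top μ _) (measure_ne_top μ _)] at h3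
    simp only [Phi]
    linarith
  have k1 := hmono (show x ≤ x₀ + 1 / (n + 1) by linarith)
  have k2 := hmono (show x₀ - 1 / (n + 1) ≤ x by linarith)
  have k3 := hmono (show x₀ ≤ x₀ + 1 / (n + 1) by
    have : (0:ℝ) < 1 / (n+1) := by positivity
    linarith)
  have k4 := hmono (show x₀ - 1 / (n + 1) ≤ x₀ by
    have : (0:ℝ) < 1 / (n+1) := by positivity
    linarith)
  have habs : |Phi μ x - Phi μ x₀| ≤ Phi μ (x₀ + 1 / (n + 1)) - Phi μ (x₀ - 1 / (n + 1)) :=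
    abs_le.2 ⟨by linarith, by linarith⟩
  linarith

section FXhelpers

variable {F FK FX : ℝ → ℝ → ℝ} {m : ℝ}

/-- `F(1,·)` is concave on `(0,∞)`. -/
private lemma f_concave (hF : Assumption2 F FK FX m) :
    ConcaveOn ℝ (Set.Ioi (0:ℝ)) (fun x => F 1 x) := by
  constructor
  · exact convex_Ioi 0
  · intro x hx y hy a b ha hb hab
    have h := hF.concave.2 (x := (1, x)) (y := (1, y))
      ⟨Set.mem_Ioi.2 one_pos, hx⟩ ⟨Set.mem_Ioi.2 one_pos, hy⟩ ha hb hab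
    simpa [Prod.smul_mk, Prod.mk_add_mk, hab] using h

/-- `FX` is homogeneous of degree zero along `(K,1) ~ (1,1/K)`. -/
private lemma FX_homog0 (hF : Assumption2 F FK FX m) {K : ℝ} (hK : 0 < K) :
    FX K 1 = FX 1 K⁻¹ := by
  have hKinv : (0:ℝ) < K⁻¹ := inv_pos.2 hK
  have h1 : HasDerivAt (fun x : ℝ => F K (K * x)) (FX K 1 * K) K⁻¹ := by
    have hchain := (hF.hFX K (K * K⁻¹) hK (by rw [mul_inv_cancel₀ hK.ne']; exact one_pos)).comp
      K⁻¹ ((hasDerivAt_id K⁻¹).const_mul K)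
    simpa [mul_inv_cancel₀ hK.ne', Function.comp_def] using hchain
  have h2 : HasDerivAt (fun x : ℝ => K * F 1 x) (K * FX 1 K⁻¹) K⁻¹ :=
    (hF.hFX 1 K⁻¹ one_pos hKinv).const_mul K
  have heq : (fun x : ℝ => K * F 1 x) =ᶠ[𝓝 K⁻¹] (fun x : ℝ => F K (K * x)) := by
    filter_upwards [Ioi_mem_nhds hKinv] with x hx
    have h := hF.homog K 1 x hK one_pos hx
    rw [mul_one] at h
    exact h.symm
  have h3 : HasDerivAt (fun x : ℝ => F K (K * x)) (K * FX 1 K⁻¹) K⁻¹ :=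
    h2.congr_of_eventuallyEq heq.symm
  have huniq : FX K 1 * K = K * FX 1 K⁻¹ := h1.unique h3
  exact mul_right_cancel₀ hK.ne' (huniq.trans (mul_comm K (FX 1 K⁻¹)))

/-- `K ↦ FX(K,1)` is nondecreasing on `(0,∞)`. -/
private lemma FX_mono (hF : Assumption2 F FK FX m) {K1 K2 : ℝ} (h1 : 0 < K1) (h12 : K1 ≤ K2) :
    FX K1 1 ≤ FX K2 1 := by
  rcases eq_or_lt_of_le h12 with rfl | hlt
  · exact le_refl _
  · have h2 : 0 < K2 := h1.trans hlt
    rw [FX_homog0 hF h1, FX_homog0 hF h2]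
    have hxy : K2⁻¹ < K1⁻¹ := by
      rw [inv_lt_inv₀ h2 h1]
      exact hlt
    have ha : FX 1 K1⁻¹ ≤ slope (fun z => F 1 z) K2⁻¹ K1⁻¹ :=
      (f_concave hF).le_slope_of_hasDerivAt (Set.mem_Ioi.2 (inv_pos.2 h2))
        (Set.mem_Ioi.2 (inv_pos.2 h1)) hxy (hF.hFX 1 K1⁻¹ one_pos (inv_pos.2 h1))
    have hb : slope (fun z => F 1 z) K2⁻¹ K1⁻¹ ≤ FX 1 K2⁻¹ :=
      (f_concave hF).slope_le_of_hasDerivAt (Set.mem_Ioi.2 (inv_pos.2 h2))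
        (Set.mem_Ioi.2 (inv_pos.2 h1)) hxy (hF.hFX 1 K2⁻¹ one_pos (inv_pos.2 h2))
    linarith

/-- The rent-to-capital series along a geometric grid is summable: a telescoping
consequence of concavity of `F(1,·)`. -/
private lemma FX_geom_summable (hF : Assumption2 F FK FX m) {G d : ℝ} (hG1 : 1 < G)
    (hd : 0 < d) : Summable (fun t : ℕ => FX 1 (d / G ^ t) * (d / G ^ t)) := by
  have hGpos : (0:ℝ) < G := lt_trans one_pos hG1
  have hy : ∀ t : ℕ, (0:ℝ) < d / G ^ t := fun t => div_pos hd (pow_pos hGpos t)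
  have hstep : ∀ t : ℕ, FX 1 (d / G ^ t) * (d / G ^ t) * (1 - 1/G) ≤
      F 1 (d / G ^ t) - F 1 (d / G ^ (t+1)) := by
    intro t
    have hxy : d / G ^ (t+1) < d / G ^ t := by
      apply div_lt_div_of_pos_left hd (pow_pos hGpos t)
      rw [pow_succ]
      nlinarith [pow_pos hGpos t]
    have htan : FX 1 (d / G ^ t) ≤ slope (fun z => F 1 z) (d / G ^ (t+1)) (d / G ^ t) :=
      (f_concave hF).le_slope_of_hasDerivAt (Set.mem_Ioi.2 (hy (t+1))) (Set.mem_Ioi.2 (hy t))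
        hxy (hF.hFX 1 (d / G ^ t) one_pos (hy t))
    rw [slope_def_field] at htan
    have hdiffpos : 0 < d / G ^ t - d / G ^ (t+1) := by linarith
    have h2 := (le_div_iff₀ hdiffpos).1 htan
    have hdiff : d / G ^ t - d / G ^ (t+1) = d / G ^ t * (1 - 1/G) := by
      rw [pow_succ]
      field_simp
    calc FX 1 (d / G ^ t) * (d / G ^ t) * (1 - 1/G)
        = FX 1 (d / G ^ t) * (d / G ^ t - d / G ^ (t+1)) := by rw [hdiff]; ring
      _ ≤ F 1 (d / G ^ t) - F 1 (d / G ^ (t+1)) := h2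
  have hGfac : 0 < 1 - 1/G := by
    have : 1/G < 1 := by rw [div_lt_one hGpos]; exact hG1
    linarith
  apply summable_of_sum_range_le (c := F 1 d / (1 - 1/G))
  · intro t
    exact (mul_pos (hF.FX_pos 1 _ one_pos (hy t)) (hy t)).le
  · intro n
    have htel : ∑ t ∈ Finset.range n, (F 1 (d / G ^ t) - F 1 (d / G ^ (t+1))) =
        F 1 (d / G ^ 0) - F 1 (d / G ^ n) := Finset.sum_range_sub' (fun t => F 1 (d / G ^ t)) n
    have hsum_le : (∑ t ∈ Finset.range n, FX 1 (d / G ^ t) * (d / G ^ t)) * (1 - 1/G) ≤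
        F 1 (d / G ^ 0) - F 1 (d / G ^ n) := by
      rw [Finset.sum_mul, ← htel]
      exact Finset.sum_le_sum fun t _ => hstep t
    have hfn : 0 < F 1 (d / G ^ n) := hF.pos 1 _ one_pos (hy n)
    have h0 : F 1 (d / G ^ 0) = F 1 d := by norm_num
    rw [le_div_iff₀ hGfac]
    rw [h0] at hsum_le
    linarith

end FXhelpers


/-- **Land Bubble Characterization Theorem, part 2.** Under Assumptions 1–4 and
`λ > λ̄`, along the equilibrium path `(K_t, z̄_t)` with `K_t/G^t` converging to a
positive limit and `z̄_t → G/m` (where `G > 1` solves the growth-rate equation),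
future rent-price ratios are summable, land exhibits a bubble (`P_t > V_t` for all
`t`), and the price-rent ratio diverges to infinity (unbalanced growth). -/
theorem land_bubble_characterization_bubbly
    (μ : Measure ℝ) (hμ : Assumption1 μ)
    (F FK FX : ℝ → ℝ → ℝ) (m : ℝ) (hF : Assumption2 F FK FX m)
    (β lam : ℝ) (hβ : β ∈ Set.Ioo (0 : ℝ) 1) (hlam : 1 ≤ lam)
    (hA3 : 1 - Phi μ (1 / m) < β * m * ∫ z in Set.Ioi (1 / m), z ∂μ)
    -- Assumption 4: `liminf_{K→∞} σ(K,1) > 1`, i.e. the derivative of the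
    -- log marginal-rate-of-substitution has `limsup < 1` at infinity.
    (s : ℝ → ℝ)
    (hs : ∀ k : ℝ, HasDerivAt
      (fun k' => Real.log (FX (Real.exp k') 1 / FK (Real.exp k') 1)) (s k) k)
    (hA4 : Filter.limsup s Filter.atTop < 1)
    (hlamgt : lamBar β m μ < lam)
    (G : ℝ) (hG1 : 1 < G)
    (hGeq : (G / m) * (1 - β * (lam * Phi μ (G / m) + 1 - lam)) =
      β * lam * ∫ z in Set.Ioi (G / m), z ∂μ)
    (hGthr : 1 - 1 / lam < Phi μ (G / m))
    (K zb : ℕ → ℝ) (hKpos : ∀ t, 0 < K t) (hthr : ∀ t, 1 - 1 / lam < Phi μ (zb t))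
    (hdynK : ∀ t, K (t + 1) =
      β * lam * Wfun μ β lam F (K t) (zb t) * ∫ z in Set.Ioi (zb t), z ∂μ)
    (hdynz : ∀ t, zb t = (Pfun μ β lam F (K (t + 1)) (zb (t + 1)) + FX (K (t + 1)) 1) /
      (FK (K (t + 1)) 1 * Pfun μ β lam F (K t) (zb t)))
    (c : ℝ) (hc : 0 < c) (hconvK : Tendsto (fun t => K t / G ^ t) atTop (𝓝 c))
    (hconvz : Tendsto zb atTop (𝓝 (G / m)))
    (P r R q V : ℕ → ℝ)
    (hP : ∀ t, P t = Pfun μ β lam F (K t) (zb t))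
    (hr : ∀ t, r t = FX (K t) 1)
    (hR : ∀ t, R t = (P (t + 1) + r (t + 1)) / P t)
    (hq : ∀ t, q t = ∏ s ∈ Finset.range t, (R s)⁻¹)
    (hV : ∀ t, V t = (q t)⁻¹ * ∑' s : ℕ, q (t + 1 + s) * r (t + 1 + s)) :
    Summable (fun t => r (t + 1) / P (t + 1)) ∧
    (∀ t, V t < P t) ∧
    Tendsto (fun t => P t / r t) atTop atTop := by
  obtain ⟨hβ0, hβ1⟩ := hβ
  have hlam0 : (0:ℝ) < lam := lt_of_lt_of_le one_pos hlam
  have hGpos : (0:ℝ) < G := lt_trans one_pos hG1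
  -- basic Phi facts
  have hPhi_lt_one : ∀ z : ℝ, Phi μ z < 1 := by
    intro z
    have h := ENNReal.toReal_strict_mono (by simp) (hμ.lt_one z)
    simpa [Phi] using h
  -- positivity of the investment share and denominator
  have hθpos : ∀ z : ℝ, 1 - 1 / lam < Phi μ z → 0 < lam * Phi μ z + 1 - lam := by
    intro z hz
    have h1 : lam * (1 - 1 / lam) = lam - 1 := by field_simp
    have h2 : lam * (1 - 1 / lam) < lam * Phi μ z := mul_lt_mul_of_pos_left hz hlam0
    linarith
  have hθlt : ∀ z : ℝ, lam * Phi μ z + 1 - lam < 1 := by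
    intro z
    nlinarith [hPhi_lt_one z, hlam0]
  have hDpos : ∀ z : ℝ, 1 - 1 / lam < Phi μ z → 0 < 1 - β * (lam * Phi μ z + 1 - lam) := by
    intro z hz
    nlinarith [hθpos z hz, hθlt z]
  -- positivity of rents and prices
  have hrpos : ∀ t, 0 < r t := fun t => by
    rw [hr]; exact hF.FX_pos _ _ (hKpos t) one_pos
  have hPpos : ∀ t, 0 < P t := by
    intro t
    rw [hP, Pfun]
    exact div_pos (mul_pos (mul_pos hβ0 (hθpos _ (hthr t))) (hF.pos _ 1 (hKpos t) one_pos))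
      (hDpos _ (hthr t))
  -- limits along the path
  have hGpow : Tendsto (fun t : ℕ => (G:ℝ) ^ t) atTop atTop :=
    tendsto_pow_atTop_atTop_of_one_lt hG1
  have hKtop : Tendsto K atTop atTop := by
    refine (hconvK.pos_mul_atTop hc hGpow).congr fun t => ?_
    field_simp
  have hFavg : Tendsto (fun t => F (K t) 1 / K t) atTop (𝓝 m) := hF.lim_avg.comp hKtop
  have hFG : Tendsto (fun t => F (K t) 1 / G ^ t) atTop (𝓝 (m * c)) := by
    refine (hFavg.mul hconvK).congr fun t => ?_
    rw [div_mul_div_comm, mul_comm (K t) ((G:ℝ) ^ t), mul_div_mul_right _ _ (hKpos t).ne']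
  have hμx0 : μ {G / m} = 0 := hμ.absCont Real.volume_singleton
  have hPhit : Tendsto (fun t => Phi μ (zb t)) atTop (𝓝 (Phi μ (G / m))) :=
    (continuousAt_Phi μ hμ.prob (G / m) hμx0).tendsto.comp hconvz
  have hθt : Tendsto (fun t => lam * Phi μ (zb t) + 1 - lam) atTop
      (𝓝 (lam * Phi μ (G / m) + 1 - lam)) :=
    ((hPhit.const_mul lam).add_const 1).sub_const lam
  have hDt : Tendsto (fun t => 1 - β * (lam * Phi μ (zb t) + 1 - lam)) atTop
      (𝓝 (1 - β * (lam * Phi μ (G / m) + 1 - lam))) :=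
    tendsto_const_nhds.sub (hθt.const_mul β)
  have hDstarpos := hDpos _ hGthr
  have hθstarpos := hθpos _ hGthr
  set pstar : ℝ := β * (lam * Phi μ (G / m) + 1 - lam) * (m * c) /
    (1 - β * (lam * Phi μ (G / m) + 1 - lam)) with hpstar
  have hpstarpos : 0 < pstar :=
    div_pos (mul_pos (mul_pos hβ0 hθstarpos) (mul_pos hF.m_pos hc)) hDstarpos
  have hPG : Tendsto (fun t => P t / G ^ t) atTop (𝓝 pstar) := by
    have h := ((hθt.const_mul β).mul hFG).div hDt hDstarpos.ne'
    refine h.congr fun t => ?_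
    simp only [Pi.div_apply]
    rw [hP, Pfun]
    ring
  -- eventual bounds
  have hE2 : ∀ᶠ t in atTop, K t ≤ (c + 1) * G ^ t := by
    filter_upwards [hconvK.eventually (eventually_le_nhds (lt_add_one c))] with t ht
    have hg : (0:ℝ) < G ^ t := pow_pos hGpos t
    calc K t = K t / G ^ t * G ^ t := by field_simp
      _ ≤ (c + 1) * G ^ t := mul_le_mul_of_nonneg_right ht hg.le
  have hE3 : ∀ᶠ t in atTop, pstar / 2 * G ^ t ≤ P t := by
    filter_upwards [hPG.eventually (eventually_ge_nhds (half_lt_self hpstarpos))] with t ht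
    have hg : (0:ℝ) < G ^ t := pow_pos hGpos t
    calc pstar / 2 * G ^ t ≤ P t / G ^ t * G ^ t := mul_le_mul_of_nonneg_right ht hg.le
      _ = P t := by field_simp
  -- the summable majorant coming from concavity of F
  set d : ℝ := (c + 1)⁻¹ with hd
  have hdpos : (0:ℝ) < d := inv_pos.2 (by linarith)
  have hw : Summable (fun t : ℕ => FX 1 (d / G ^ t) * (d / G ^ t)) :=
    FX_geom_summable hF hG1 hdpos
  have hgrid : ∀ t : ℕ, FX ((c + 1) * G ^ t) 1 = FX 1 (d / G ^ t) := by
    intro t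
    have hpos : (0:ℝ) < (c + 1) * G ^ t := mul_pos (by linarith) (pow_pos hGpos t)
    rw [FX_homog0 hF hpos]
    congr 1
    rw [hd, mul_inv, div_eq_mul_inv]
  have hkey : ∀ᶠ t in atTop, r t / P t ≤
      2 / (pstar * d) * (FX 1 (d / G ^ t) * (d / G ^ t)) := by
    filter_upwards [hE2, hE3] with t h2 h3
    have hGt : (0:ℝ) < G ^ t := pow_pos hGpos t
    have hrb : r t ≤ FX 1 (d / G ^ t) := by
      rw [hr, ← hgrid t]
      exact FX_mono hF (hKpos t) h2
    have hden : (0:ℝ) < pstar / 2 * G ^ t := mul_pos (half_pos hpstarpos) hGt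
    calc r t / P t ≤ r t / (pstar / 2 * G ^ t) :=
          div_le_div_of_nonneg_left (hrpos t).le hden h3
      _ ≤ FX 1 (d / G ^ t) / (pstar / 2 * G ^ t) :=
          (div_le_div_iff_of_pos_right hden).2 hrb
      _ = 2 / (pstar * d) * (FX 1 (d / G ^ t) * (d / G ^ t)) := by
          rw [hd]
          field_simp
  -- Part 1: summability of the rent-price ratios
  have hsum : Summable (fun t => r (t + 1) / P (t + 1)) := by
    apply summable_of_eventually_le_summable
      (fun n => (div_pos (hrpos _) (hPpos _)).le)
      (((summable_nat_add_iff 1).2 hw).mul_left (2 / (pstar * d)))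
    exact (tendsto_add_atTop_nat 1).eventually hkey
  -- Part 3: the price-rent ratio diverges
  have hpart3 : Tendsto (fun t => P t / r t) atTop atTop := by
    have hw0 : Tendsto (fun t : ℕ => 2 / (pstar * d) * (FX 1 (d / G ^ t) * (d / G ^ t)))
        atTop (𝓝 0) := by
      have h := hw.tendsto_atTop_zero.const_mul (2 / (pstar * d))
      simpa using h
    have hrP0 : Tendsto (fun t => r t / P t) atTop (𝓝 0) :=
      tendsto_of_tendsto_of_tendsto_of_le_of_le' tendsto_const_nhds hw0
        (Eventually.of_forall fun t => (div_pos (hrpos t) (hPpos t)).le) hkey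
    have h0' : Tendsto (fun t => r t / P t) atTop (𝓝[>] 0) :=
      tendsto_nhdsWithin_iff.2
        ⟨hrP0, Eventually.of_forall fun t => div_pos (hrpos t) (hPpos t)⟩
    refine h0'.inv_tendsto_nhdsGT_zero.congr fun t => ?_
    rw [Pi.inv_apply, inv_div]
  -- Part 2: the fundamental value lies strictly below the price
  have hRpos : ∀ t, 0 < R t := fun t => by
    rw [hR]; exact div_pos (add_pos (hPpos _) (hrpos _)) (hPpos t)
  have hqpos : ∀ t, 0 < q t := fun t => by
    rw [hq]; exact Finset.prod_pos fun i _ => inv_pos.2 (hRpos i)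
  have hPrne : ∀ t, P (t + 1) + r (t + 1) ≠ 0 := fun t => (add_pos (hPpos _) (hrpos _)).ne'
  have hqPr : ∀ t, q (t + 1) * (P (t + 1) + r (t + 1)) = q t * P t := by
    intro t
    rw [hq (t + 1), Finset.prod_range_succ, ← hq t, hR t, inv_div, mul_assoc,
      div_mul_cancel₀ _ (hPrne t)]
  have htel : ∀ t N, ∑ i ∈ Finset.range N, q (t + 1 + i) * r (t + 1 + i) =
      q t * P t - q (t + N) * P (t + N) := by
    intro t N
    induction N with
    | zero => simp
    | succ n ih =>
      rw [Finset.sum_range_succ, ih]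
      have h' : q (t + n + 1) * P (t + n + 1) + q (t + n + 1) * r (t + n + 1) =
          q (t + n) * P (t + n) := by
        rw [← mul_add]; exact hqPr (t + n)
      have hidx : t + 1 + n = t + n + 1 := by omega
      have hidx2 : t + (n + 1) = t + n + 1 := by omega
      rw [hidx, hidx2]
      linarith
  have hupos : ∀ t : ℕ, 0 < r (t + 1) / P (t + 1) := fun t => div_pos (hrpos _) (hPpos _)
  set S : ℝ := ∑' t : ℕ, r (t + 1) / P (t + 1) with hS
  set L : ℝ := P 0 * Real.exp (-S) with hL
  have hLpos : 0 < L := mul_pos (hPpos 0) (Real.exp_pos _)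
  have hqPstep : ∀ n, q (n + 1) * P (n + 1) = q n * P n * (1 + r (n + 1) / P (n + 1))⁻¹ := by
    intro n
    have h1u : 1 + r (n + 1) / P (n + 1) = (P (n + 1) + r (n + 1)) / P (n + 1) := by
      rw [add_div, div_self (hPpos (n + 1)).ne']
    rw [← hqPr n, h1u, inv_div, mul_assoc, mul_comm (P (n+1) + r (n+1)),
      div_mul_cancel₀ _ (hPrne n)]
  have hmain : ∀ n, P 0 * Real.exp (-(∑ i ∈ Finset.range n, r (i + 1) / P (i + 1))) ≤
      q n * P n := by
    intro n
    induction n with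
    | zero => simp [hq 0]
    | succ n ih =>
      have hinv : Real.exp (-(r (n + 1) / P (n + 1))) ≤ (1 + r (n + 1) / P (n + 1))⁻¹ := by
        rw [Real.exp_neg]
        apply inv_anti₀ (by linarith [hupos n])
        linarith [Real.add_one_le_exp (r (n + 1) / P (n + 1))]
      calc P 0 * Real.exp (-(∑ i ∈ Finset.range (n + 1), r (i + 1) / P (i + 1)))
          = P 0 * Real.exp (-(∑ i ∈ Finset.range n, r (i + 1) / P (i + 1))) *
            Real.exp (-(r (n + 1) / P (n + 1))) := by
            rw [Finset.sum_range_succ, neg_add, Real.exp_add]; ring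
        _ ≤ q n * P n * (1 + r (n + 1) / P (n + 1))⁻¹ := by
            apply mul_le_mul ih hinv (Real.exp_pos _).le (mul_pos (hqpos n) (hPpos n)).le
        _ = q (n + 1) * P (n + 1) := (hqPstep n).symm
  have hqPge : ∀ n, L ≤ q n * P n := by
    intro n
    calc L ≤ P 0 * Real.exp (-(∑ i ∈ Finset.range n, r (i + 1) / P (i + 1))) := by
          apply mul_le_mul_of_nonneg_left _ (hPpos 0).le
          apply Real.exp_le_exp.2
          apply neg_le_neg
          exact hsum.sum_le_tsum (Finset.range n) (fun i _ => (hupos i).le)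
      _ ≤ q n * P n := hmain n
  refine ⟨hsum, fun t => ?_, hpart3⟩
  have hnonneg : ∀ i, 0 ≤ q (t + 1 + i) * r (t + 1 + i) :=
    fun i => (mul_pos (hqpos _) (hrpos _)).le
  have hpartial : ∀ N, ∑ i ∈ Finset.range N, q (t + 1 + i) * r (t + 1 + i) ≤
      q t * P t - L := by
    intro N
    rw [htel t N]
    linarith [hqPge (t + N)]
  have htsum_le : ∑' i : ℕ, q (t + 1 + i) * r (t + 1 + i) ≤ q t * P t - L :=
    Real.tsum_le_of_sum_range_le hnonneg hpartial
  rw [hV t]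
  have hqinv : 0 < (q t)⁻¹ := inv_pos.2 (hqpos t)
  calc (q t)⁻¹ * ∑' i : ℕ, q (t + 1 + i) * r (t + 1 + i)
      ≤ (q t)⁻¹ * (q t * P t - L) := mul_le_mul_of_nonneg_left htsum_le hqinv.le
    _ = P t - (q t)⁻¹ * L := by
        rw [mul_sub, ← mul_assoc, inv_mul_cancel₀ (hqpos t).ne', one_mul]
    _ < P t := by
        have hpos : 0 < (q t)⁻¹ * L := mul_pos hqinv hLpos
        linarith
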